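/- For all n ≥ 4, f(n,3) = n·2^{n-1} − (n² + n) + (n(n-1)(n+4)/6)·(2^{n-3} − 1) + 1, where f(n,r) = 1 + ∑_{k=1}^{r} ∑_{h=k+1}^{k+n-r} C(n,h)·C(h,k). -/

import Mathlib

def f (n r : ℕ) : ℕ :=
  1 + ∑ k ∈ Finset.Icc 1 r, ∑ h ∈ Finset.Icc (k + 1) (k + n - r), Nat.choose n h * Nat.choose h k

/-- `∑_{h=0}^n C(n,h) C(h,k) = C(n,k) 2^(n-k)`. -/
lemma sum_choose_mul_choose (n k : ℕ) (hk : k ≤ n) :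
    ∑ h ∈ Finset.range (n + 1), Nat.choose n h * Nat.choose h k
      = Nat.choose n k * 2 ^ (n - k) := by
  have h1 : ∑ h ∈ Finset.range (n + 1), Nat.choose n h * Nat.choose h k
      = ∑ h ∈ Finset.Ico k (n + 1), Nat.choose n h * Nat.choose h k := by
    refine (Finset.sum_subset ?_ ?_).symm
    · intro x hx
      simp only [Finset.mem_Ico, Finset.mem_range] at *
      omega
    · intro x hx hx'
      simp only [Finset.mem_Ico, Finset.mem_range] at *
      have : x < k := by omega
      rw [Nat.choose_eq_zero_of_lt this, Nat.mul_zero]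
  rw [h1, Finset.sum_Ico_eq_sum_range]
  have h2 : ∀ j ∈ Finset.range (n + 1 - k),
      Nat.choose n (k + j) * Nat.choose (k + j) k
        = Nat.choose n k * Nat.choose (n - k) j := by
    intro j hj
    simp only [Finset.mem_range] at hj
    rw [Nat.choose_mul (by omega), Nat.add_sub_cancel_left]
  rw [Finset.sum_congr rfl h2, ← Finset.mul_sum]
  have h3 : n + 1 - k = (n - k) + 1 := by omega
  rw [h3, Nat.sum_range_choose]

lemma two_pow_ge5 (m : ℕ) : m + 5 ≤ 2 ^ (m + 3) := by
  induction m with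
  | zero => norm_num
  | succ m ih =>
    have : 2 ^ (m + 1 + 3) = 2 * 2 ^ (m + 3) := by ring
    omega

lemma trim_aux (m k : ℕ) (hk : k ≤ 3) :
    ∑ h ∈ Finset.Ico 0 (m + 5), Nat.choose (m + 4) h * Nat.choose h k
      = (∑ h ∈ Finset.Ico 0 (k + 1), Nat.choose (m + 4) h * Nat.choose h k)
        + (∑ h ∈ Finset.Ico (k + 1) (m + k + 2), Nat.choose (m + 4) h * Nat.choose h k)
        + (∑ h ∈ Finset.Ico (m + k + 2) (m + 5), Nat.choose (m + 4) h * Nat.choose h k) := by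
  rw [Finset.sum_Ico_consecutive _ (by omega : 0 ≤ k + 1) (by omega : k + 1 ≤ m + k + 2),
    Finset.sum_Ico_consecutive _ (by omega : 0 ≤ m + k + 2) (by omega : m + k + 2 ≤ m + 5)]

theorem f_three (n : ℕ) (hn : 4 ≤ n) :
    f n 3 = n * 2 ^ (n - 1) - (n ^ 2 + n) + (n * (n - 1) * (n + 4) / 6) * (2 ^ (n - 3) - 1) + 1 := by
  obtain ⟨m, rfl⟩ : ∃ m, n = m + 4 := ⟨n - 4, by omega⟩
  clear hn
  -- small binomial values
  have c1 : Nat.choose (m + 4) 1 = m + 4 := Nat.choose_one_right _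
  have c2 : 2 * Nat.choose (m + 4) 2 = (m + 4) * (m + 3) := by
    have h := Nat.descFactorial_eq_factorial_mul_choose (m + 4) 2
    have hd : (m + 4).descFactorial 2 = (m + 4) * (m + 3) := by
      simp [Nat.descFactorial]; ring
    rw [hd] at h
    simpa [Nat.factorial] using h.symm
  have c3 : 6 * Nat.choose (m + 4) 3 = (m + 4) * (m + 3) * (m + 2) := by
    have h := Nat.descFactorial_eq_factorial_mul_choose (m + 4) 3
    have hd : (m + 4).descFactorial 3 = (m + 4) * (m + 3) * (m + 2) := by
      simp [Nat.descFactorial]; ring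
    rw [hd] at h
    simpa [Nat.factorial] using h.symm
  have ctop1 : Nat.choose (m + 4) (m + 3) = m + 4 := by
    have h := Nat.choose_symm (by omega : 1 ≤ m + 4)
    rw [show m + 4 - 1 = m + 3 from rfl] at h
    rw [h, c1]
  -- full-range sums
  have key : ∀ k : ℕ, k ≤ 4 → ∑ h ∈ Finset.Ico 0 (m + 5), Nat.choose (m + 4) h * Nat.choose h k
      = Nat.choose (m + 4) k * 2 ^ (m + 4 - k) := by
    intro k hk
    rw [← Finset.range_eq_Ico]
    exact sum_choose_mul_choose (m + 4) k (by omega)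
  -- k = 1
  have e1 : ∑ h ∈ Finset.Icc 2 (m + 2), Nat.choose (m + 4) h * Nat.choose h 1
      = (m + 4) * 2 ^ (m + 3) - ((m + 4) ^ 2 + (m + 4)) := by
    have t := trim_aux m 1 (by omega)
    rw [key 1 (by omega), show (1 : ℕ) + 1 = 2 from rfl, show m + 1 + 2 = m + 3 from rfl,
      c1, show m + 4 - 1 = m + 3 from rfl] at t
    have l : ∑ h ∈ Finset.Ico 0 2, Nat.choose (m + 4) h * Nat.choose h 1 = m + 4 := by
      rw [show (2 : ℕ) = 0 + 1 + 1 from rfl, Finset.sum_Ico_succ_top (by omega),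
        Finset.sum_Ico_succ_top (by omega)]
      simp [c1]
    have r : ∑ h ∈ Finset.Ico (m + 3) (m + 5), Nat.choose (m + 4) h * Nat.choose h 1
        = (m + 4) * (m + 3) + (m + 4) := by
      rw [show m + 5 = m + 4 + 1 from rfl, Finset.sum_Ico_succ_top (by omega),
        show Finset.Ico (m + 3) (m + 4) = {m + 3} from by
          rw [show m + 4 = m + 3 + 1 from rfl, Nat.Ico_succ_singleton],
        Finset.sum_singleton]
      simp [ctop1, Nat.choose_self, Nat.choose_one_right, c1]
    rw [l, r] at t
    rw [show Finset.Icc 2 (m + 2) = Finset.Ico 2 (m + 3) from by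
      rw [show m + 3 = m + 2 + 1 from rfl, Finset.Ico_add_one_right_eq_Icc]]
    have hY : (m + 4) ^ 2 + (m + 4) = (m + 4) + ((m + 4) * (m + 3) + (m + 4)) := by ring
    omega
  -- k = 2
  have e2 : ∑ h ∈ Finset.Icc 3 (m + 3), Nat.choose (m + 4) h * Nat.choose h 2
      = Nat.choose (m + 4) 2 * 2 ^ (m + 2) - 2 * Nat.choose (m + 4) 2 := by
    have t := trim_aux m 2 (by omega)
    rw [key 2 (by omega), show (2 : ℕ) + 1 = 3 from rfl, show m + 2 + 2 = m + 4 from rfl,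
      show m + 4 - 2 = m + 2 from rfl] at t
    have l : ∑ h ∈ Finset.Ico 0 3, Nat.choose (m + 4) h * Nat.choose h 2
        = Nat.choose (m + 4) 2 := by
      rw [show (3 : ℕ) = 0 + 1 + 1 + 1 from rfl, Finset.sum_Ico_succ_top (by omega),
        Finset.sum_Ico_succ_top (by omega), Finset.sum_Ico_succ_top (by omega)]
      simp
    have r : ∑ h ∈ Finset.Ico (m + 4) (m + 5), Nat.choose (m + 4) h * Nat.choose h 2
        = Nat.choose (m + 4) 2 := by
      rw [show Finset.Ico (m + 4) (m + 5) = {m + 4} from by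
        rw [show m + 5 = m + 4 + 1 from rfl, Nat.Ico_succ_singleton], Finset.sum_singleton]
      simp [Nat.choose_self]
    rw [l, r] at t
    rw [show Finset.Icc 3 (m + 3) = Finset.Ico 3 (m + 4) from by
      rw [show m + 4 = m + 3 + 1 from rfl, Finset.Ico_add_one_right_eq_Icc]]
    omega
  -- k = 3
  have e3 : ∑ h ∈ Finset.Icc 4 (m + 4), Nat.choose (m + 4) h * Nat.choose h 3
      = Nat.choose (m + 4) 3 * 2 ^ (m + 1) - Nat.choose (m + 4) 3 := by
    have t := trim_aux m 3 (by omega)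
    rw [key 3 (by omega), show (3 : ℕ) + 1 = 4 from rfl, show m + 3 + 2 = m + 5 from rfl,
      show m + 4 - 3 = m + 1 from rfl, Finset.Ico_self, Finset.sum_empty] at t
    have l : ∑ h ∈ Finset.Ico 0 4, Nat.choose (m + 4) h * Nat.choose h 3
        = Nat.choose (m + 4) 3 := by
      rw [show (4 : ℕ) = 0 + 1 + 1 + 1 + 1 from rfl, Finset.sum_Ico_succ_top (by omega),
        Finset.sum_Ico_succ_top (by omega), Finset.sum_Ico_succ_top (by omega),
        Finset.sum_Ico_succ_top (by omega)]
      simp [show Nat.choose 1 3 = 0 from rfl]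
    rw [l] at t
    rw [show Finset.Icc 4 (m + 4) = Finset.Ico 4 (m + 5) from by
      rw [show m + 5 = m + 4 + 1 from rfl, Finset.Ico_add_one_right_eq_Icc]]
    omega
  -- unfold f
  have hf : f (m + 4) 3 = 1 + (∑ h ∈ Finset.Icc 2 (m + 2), Nat.choose (m + 4) h * Nat.choose h 1
      + (∑ h ∈ Finset.Icc 3 (m + 3), Nat.choose (m + 4) h * Nat.choose h 2
      + ∑ h ∈ Finset.Icc 4 (m + 4), Nat.choose (m + 4) h * Nat.choose h 3)) := by
    rw [f]
    rw [show Finset.Icc 1 3 = ({1, 2, 3} : Finset ℕ) from by decide]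
    rw [Finset.sum_insert (by decide), Finset.sum_insert (by decide), Finset.sum_singleton]
    rw [show 1 + (m + 4) - 3 = m + 2 from by omega, show 2 + (m + 4) - 3 = m + 3 from by omega,
      show 3 + (m + 4) - 3 = m + 4 from by omega]
  rw [hf, e1, e2, e3]
  set A := Nat.choose (m + 4) 2 with hA
  set B := Nat.choose (m + 4) 3 with hB
  -- D = 2A + B
  have hD : (m + 4) * (m + 4 - 1) * (m + 4 + 4) / 6 = 2 * A + B := by
    rw [show m + 4 - 1 = m + 3 from rfl, show m + 4 + 4 = m + 8 from rfl]
    have h6 : (m + 4) * (m + 3) * (m + 8) = 6 * (2 * A + B) := by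
      calc (m + 4) * (m + 3) * (m + 8)
          = 6 * ((m + 4) * (m + 3)) + (m + 4) * (m + 3) * (m + 2) := by ring
        _ = 6 * (2 * A) + 6 * B := by rw [c2, c3]
        _ = 6 * (2 * A + B) := by ring
    rw [h6, Nat.mul_div_cancel_left _ (by norm_num)]
  rw [hD, show m + 4 - 1 = m + 3 from rfl, show m + 4 - 3 = m + 1 from rfl]
  -- arithmetic
  have hp : m + 5 ≤ 2 ^ (m + 3) := two_pow_ge5 m
  have hineq1 : (m + 4) ^ 2 + (m + 4) ≤ (m + 4) * 2 ^ (m + 3) := by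
    calc (m + 4) ^ 2 + (m + 4) = (m + 4) * (m + 5) := by ring
    _ ≤ (m + 4) * 2 ^ (m + 3) := Nat.mul_le_mul_left _ hp
  have hApow : A * 2 ^ (m + 2) = 2 * (A * 2 ^ (m + 1)) := by
    rw [pow_succ]; ring
  have hAle : A ≤ A * 2 ^ (m + 1) := Nat.le_mul_of_pos_right _ (by positivity)
  have hBle : B ≤ B * 2 ^ (m + 1) := Nat.le_mul_of_pos_right _ (by positivity)
  have hmul : (2 * A + B) * (2 ^ (m + 1) - 1)
      = 2 * (A * 2 ^ (m + 1)) + B * 2 ^ (m + 1) - (2 * A + B) := by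
    rw [Nat.mul_sub, Nat.mul_one]
    congr 1
    ring
  rw [hmul, hApow]
  omega
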